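/- For all integers m, j, l, n ≥ 0, β_{m,j} · β_{m+l,n}^{↑j} = β_{l,n}^{↑(m+j)} · β_{m,j+n} in B_∞. -/

import Mathlib

namespace BraidPaper

/-- Relations of the infinite Artin braid group `B_∞`.  The generator with index `n : ℕ`
represents the Artin generator `σ_{n+1}` (so generators are `σ_1, σ_2, …`). -/
def BraidRels : Set (FreeGroup ℕ) :=
  {r | (∃ i : ℕ, r = .of i * .of (i + 1) * .of i * (.of (i + 1) * .of i * .of (i + 1))⁻¹) ∨
       (∃ i j : ℕ, i + 2 ≤ j ∧ r = .of i * .of j * (.of j * .of i)⁻¹)}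

/-- The infinite Artin braid group `B_∞`, presented by generators `σ_1, σ_2, …` and the
braid and far-commutativity relations. -/
abbrev BInf : Type := PresentedGroup BraidRels

/-- The Artin generator `σ i` of `B_∞` (meaningful for `i ≥ 1`). -/
def σ (i : ℕ) : BInf := PresentedGroup.of (i - 1)

lemma rel_eq_one {r : FreeGroup ℕ} (hr : r ∈ BraidRels) : PresentedGroup.mk BraidRels r = 1 := by
  have : r ∈ Subgroup.normalClosure BraidRels := Subgroup.subset_normalClosure hr
  exact (QuotientGroup.eq_one_iff r).mpr this

lemma gen_braid (i : ℕ) :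
    (PresentedGroup.of i : BInf) * .of (i + 1) * .of i = .of (i + 1) * .of i * .of (i + 1) := by
  have h := rel_eq_one (Or.inl ⟨i, rfl⟩)
  rw [map_mul, map_mul, map_mul, map_inv, map_mul, map_mul, mul_inv_eq_one] at h
  exact h

lemma gen_comm {i j : ℕ} (hij : i + 2 ≤ j) :
    (PresentedGroup.of i : BInf) * .of j = .of j * .of i := by
  have h := rel_eq_one (Or.inr ⟨i, j, hij, rfl⟩)
  rw [map_mul, map_mul, map_inv, map_mul, mul_inv_eq_one] at h
  exact h

/-- The shift endomorphism `↑ℓ : B_∞ → B_∞`, `σ_i ↦ σ_{i+ℓ}`. -/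
def shift (l : ℕ) : BInf →* BInf :=
  PresentedGroup.toGroup (f := fun n => (PresentedGroup.of (n + l) : BInf)) (by
    rintro r (⟨i, rfl⟩ | ⟨i, j, hij, rfl⟩) <;>
      simp only [map_mul, map_inv, FreeGroup.lift_apply_of, mul_inv_eq_one]
    · have h1 : i + 1 + l = i + l + 1 := by omega
      rw [h1]; exact gen_braid (i + l)
    · exact gen_comm (by omega : (i + l) + 2 ≤ j + l))

/-- The ascending product `σ_i σ_{i+1} ⋯ σ_{i+l-1}` (of `l` factors). -/
def asc (i l : ℕ) : BInf := ((List.range l).map fun t => σ (i + t)).prod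

/-- The descending product `σ_i σ_{i-1} ⋯ σ_{i-k+1}` (of `k` factors). -/
def desc (i k : ℕ) : BInf := ((List.range k).map fun t => σ (i - t)).prod

/-- The block transposition braid
`β_{k,l} = (σ_k σ_{k+1} ⋯ σ_{k+l-1})(σ_{k-1} σ_k ⋯ σ_{k+l-2}) ⋯ (σ_1 σ_2 ⋯ σ_l)`,
with `β_{k,0} = β_{0,l} = 1`. -/
def β (k l : ℕ) : BInf := ((List.range k).map fun r => asc (k - r) l).prod

/-- The positive (Garside) lift `ω_a = β_{1,1} β_{2,1} ⋯ β_{a-1,1}` of the longest element of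
the symmetric group `S_a`, with `ω_0 = ω_1 = 1`. -/
def ω (a : ℕ) : BInf := ((List.range (a - 1)).map fun t => β (t + 1) 1).prod

/-- The copy of the braid group `B_n` inside `B_∞`: the subgroup generated by
`σ_1, …, σ_{n-1}`. -/
def BSub (n : ℕ) : Subgroup BInf := Subgroup.closure {g | ∃ i, 1 ≤ i ∧ i < n ∧ g = σ i}

section Aux

lemma shift_of (a n : ℕ) : shift a (PresentedGroup.of n) = PresentedGroup.of (n + a) := by
  simp [shift, PresentedGroup.toGroup.of]

lemma shift_σ (a : ℕ) {i : ℕ} (hi : 1 ≤ i) : shift a (σ i) = σ (i + a) := by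
  unfold σ
  rw [shift_of]
  congr 1
  omega

lemma shift_shift (a b : ℕ) (x : BInf) : shift a (shift b x) = shift (b + a) x := by
  have : (shift a).comp (shift b) = shift (b + a) := by
    apply PresentedGroup.ext
    intro n
    simp [shift_of, add_assoc]
  calc shift a (shift b x) = ((shift a).comp (shift b)) x := rfl
    _ = shift (b + a) x := by rw [this]

lemma asc_zero (i : ℕ) : asc i 0 = 1 := rfl

lemma asc_succ (i l : ℕ) : asc i (l + 1) = asc i l * σ (i + l) := by
  rw [asc, List.range_succ, List.map_append, List.prod_append]
  rfl

lemma asc_one (i : ℕ) : asc i 1 = σ i := by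
  rw [show (1:ℕ) = 0 + 1 from rfl, asc_succ, asc_zero, one_mul]
  rfl

lemma shift_asc (a : ℕ) {i : ℕ} (hi : 1 ≤ i) (l : ℕ) :
    shift a (asc i l) = asc (i + a) l := by
  induction l with
  | zero => simp [asc_zero]
  | succ l ih =>
    rw [asc_succ, map_mul, ih, shift_σ a (by omega), asc_succ]
    congr 2
    omega

lemma β_zero_left (l : ℕ) : β 0 l = 1 := rfl

lemma β_succ (k l : ℕ) : β (k + 1) l = asc (k + 1) l * β k l := by
  rw [β, β, List.range_succ_eq_map, List.map_cons, List.prod_cons, List.map_map]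
  congr 2
  ext r
  simp

lemma β_zero_right (k : ℕ) : β k 0 = 1 := by
  induction k with
  | zero => rfl
  | succ k ih => rw [β_succ, asc_zero, one_mul, ih]

lemma σ_comm {i k : ℕ} (h1 : 1 ≤ i) (h2 : i + 2 ≤ k) : σ i * σ k = σ k * σ i := by
  have := gen_comm (i := i - 1) (j := k - 1) (by omega)
  simpa [σ] using this

lemma asc_comm_σ {i l K : ℕ} (h1 : 1 ≤ i) (h2 : i + l + 1 ≤ K) :
    asc i l * σ K = σ K * asc i l := by
  induction l with
  | zero => simp [asc_zero]
  | succ l ih =>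
    rw [asc_succ]
    calc asc i l * σ (i + l) * σ K = asc i l * (σ (i + l) * σ K) := mul_assoc _ _ _
      _ = asc i l * (σ K * σ (i + l)) := by rw [σ_comm (by omega) (by omega)]
      _ = asc i l * σ K * σ (i + l) := (mul_assoc _ _ _).symm
      _ = σ K * asc i l * σ (i + l) := by rw [ih (by omega)]
      _ = σ K * (asc i l * σ (i + l)) := mul_assoc _ _ _

lemma β_comm_σ {m j K : ℕ} (h : m + j + 1 ≤ K) : β m j * σ K = σ K * β m j := by
  induction m with
  | zero => simp [β_zero_left]
  | succ m ih =>
    rw [β_succ, mul_assoc, ih (by omega), ← mul_assoc,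
      asc_comm_σ (by omega) (by omega), mul_assoc]

lemma β_comm_shift_βone {m j a : ℕ} (l : ℕ) (h : m + j ≤ a) :
    β m j * shift a (β l 1) = shift a (β l 1) * β m j := by
  induction l with
  | zero => simp [β_zero_left]
  | succ l ih =>
    rw [β_succ, asc_one, map_mul, shift_σ a (by omega)]
    calc β m j * (σ (l + 1 + a) * shift a (β l 1))
        = β m j * σ (l + 1 + a) * shift a (β l 1) := (mul_assoc _ _ _).symm
      _ = σ (l + 1 + a) * β m j * shift a (β l 1) := by rw [β_comm_σ (by omega)]
      _ = σ (l + 1 + a) * (β m j * shift a (β l 1)) := mul_assoc _ _ _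
      _ = σ (l + 1 + a) * (shift a (β l 1) * β m j) := by rw [ih]
      _ = σ (l + 1 + a) * shift a (β l 1) * β m j := (mul_assoc _ _ _).symm

/-- Claim B: `β m (j+1) = β m j * (β m 1)^{↑j}`. -/
lemma β_add_one (m j : ℕ) : β m (j + 1) = β m j * shift j (β m 1) := by
  induction m with
  | zero => simp [β_zero_left]
  | succ m ih =>
    rw [β_succ, asc_succ, ih, β_succ m 1, asc_one, map_mul,
      shift_σ j (by omega)]
    calc asc (m + 1) j * σ (m + 1 + j) * (β m j * shift j (β m 1))
        = asc (m + 1) j * (σ (m + 1 + j) * β m j) * shift j (β m 1) := by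
          group
      _ = asc (m + 1) j * (β m j * σ (m + 1 + j)) * shift j (β m 1) := by
          rw [β_comm_σ (by omega)]
      _ = asc (m + 1) j * β m j * (σ (m + 1 + j) * shift j (β m 1)) := by
          group
      _ = β (m + 1) j * (σ (m + 1 + j) * shift j (β m 1)) := by rw [← β_succ]

/-- Claim A: `β m (j+n) = β m j * (β m n)^{↑j}`. -/
lemma β_add (m j n : ℕ) : β m (j + n) = β m j * shift j (β m n) := by
  induction n with
  | zero => simp [β_zero_right]
  | succ n ih =>
    rw [show j + (n + 1) = (j + n) + 1 from rfl, β_add_one m (j + n), ih,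
      β_add_one m n, map_mul, mul_assoc, shift_shift j n, add_comm n j]

/-- Lemma D: `β (a+b) l = (β a l)^{↑b} * β b l`. -/
lemma β_left_add (a b l : ℕ) : β (a + b) l = shift b (β a l) * β b l := by
  induction a with
  | zero => simp [β_zero_left]
  | succ a ih =>
    have h : a + 1 + b = a + b + 1 := by omega
    rw [h, β_succ, ih, β_succ a l, map_mul, shift_asc b (by omega),
      ← mul_assoc, h]

/-- Claim C: the `n = 1` case of the exchange identity. -/
lemma beta_exchange_one (m j l : ℕ) :
    β m j * shift j (β (m + l) 1) = shift (m + j) (β l 1) * β m (j + 1) := by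
  have h1 : β (m + l) 1 = shift m (β l 1) * β m 1 := by
    rw [show m + l = l + m from by omega, β_left_add]
  rw [h1, map_mul, shift_shift j m, β_add_one m j, ← mul_assoc,
    β_comm_shift_βone l (le_refl (m + j)), mul_assoc]

end Aux

/-- `β_{m,j} · β_{m+l,n}^{↑j} = β_{l,n}^{↑(m+j)} · β_{m,j+n}` in `B_∞`. -/
-- auxiliary lemmas to insert above the theorem

theorem beta_exchange (m j l n : ℕ) :
    β m j * shift j (β (m + l) n) = shift (m + j) (β l n) * β m (j + n) := by
  induction n generalizing j with
  | zero => simp [β_zero_right]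
  | succ n ih =>
    rw [β_add_one (m + l) n, map_mul, shift_shift j n, add_comm n j, ← mul_assoc, ih,
      mul_assoc, beta_exchange_one m (j + n) l,
      β_add_one l n, map_mul, shift_shift (m + j) n,
      show m + (j + n) = m + j + n from by omega,
      show n + (m + j) = m + j + n from by omega, ← mul_assoc]
    rfl

end BraidPaper
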